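/- arXiv:1510.07473 — 2 statements merged into one kernel-verified Lean document; each statement's English description precedes it below -/
import Mathlib

section
/- Let μ* be an upper quasi-density on ℕ, let k be a positive integer, and let h₁, …, hₙ be nonnegative integers pairwise incongruent modulo k. Set V := ⋃_{i=1}^{n} (k·ℕ + hᵢ). Then μ*(V \ F) ≥ n/k for every finite subset F of ℕ. -/
/-- `k·X + h = {k*x + h : x ∈ X}` -/
def affImage (k h : ℕ) (X : Set ℕ) : Set ℕ := (fun x => k * x + h) '' X

section aux
variable (μ : Set ℕ → ℝ)

lemma mu_empty
    (h4 : ∀ (X : Set ℕ) (h k : ℕ), 0 < h → 0 < k →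
      μ (affImage k h X) = (1 / (k : ℝ)) * μ X) : μ ∅ = 0 := by
  have := h4 ∅ 1 2 one_pos two_pos
  simp [affImage] at this
  linarith

lemma mu_zero_singleton
    (h4 : ∀ (X : Set ℕ) (h k : ℕ), 0 < h → 0 < k →
      μ (affImage k h X) = (1 / (k : ℝ)) * μ X) : μ {0} = 0 := by
  have e1 := h4 {0} 1 1 one_pos one_pos
  have e2 := h4 {0} 1 2 one_pos two_pos
  simp [affImage] at e1 e2
  linarith

lemma mu_singleton
    (h4 : ∀ (X : Set ℕ) (h k : ℕ), 0 < h → 0 < k →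
      μ (affImage k h X) = (1 / (k : ℝ)) * μ X) (m : ℕ) : μ {m} = 0 := by
  rcases Nat.eq_zero_or_pos m with rfl | hm
  · exact mu_zero_singleton μ h4
  · have := h4 {0} m 1 hm one_pos
    simp [affImage] at this
    rw [this, mu_zero_singleton μ h4]

lemma mu_finset
    (h3 : ∀ X Y : Set ℕ, μ (X ∪ Y) ≤ μ X + μ Y)
    (h4 : ∀ (X : Set ℕ) (h k : ℕ), 0 < h → 0 < k →
      μ (affImage k h X) = (1 / (k : ℝ)) * μ X) (s : Finset ℕ) :
    μ (↑s : Set ℕ) ≤ 0 := by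
  induction s using Finset.induction_on with
  | empty => simp [mu_empty μ h4]
  | @insert a s ha ih =>
    have h := h3 {a} (↑s)
    rw [Set.singleton_union] at h
    calc μ (↑(insert a s) : Set ℕ) = μ (insert a (↑s : Set ℕ)) := by
          rw [Finset.coe_insert]
      _ ≤ μ {a} + μ (↑s : Set ℕ) := h
      _ ≤ 0 := by rw [mu_singleton μ h4]; linarith

lemma mu_finite
    (h3 : ∀ X Y : Set ℕ, μ (X ∪ Y) ≤ μ X + μ Y)
    (h4 : ∀ (X : Set ℕ) (h k : ℕ), 0 < h → 0 < k →
      μ (affImage k h X) = (1 / (k : ℝ)) * μ X) (F : Set ℕ) (hF : F.Finite) :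
    μ F ≤ 0 := by
  have := mu_finset μ h3 h4 hF.toFinset
  rwa [hF.coe_toFinset] at this

lemma mu_biUnion
    (h3 : ∀ X Y : Set ℕ, μ (X ∪ Y) ≤ μ X + μ Y)
    (hemp : μ ∅ ≤ 0) (s : Finset ℕ) (f : ℕ → Set ℕ) :
    μ (⋃ r ∈ s, f r) ≤ ∑ r ∈ s, μ (f r) := by
  induction s using Finset.induction_on with
  | empty => simpa using hemp
  | @insert a s ha ih =>
    rw [Finset.set_biUnion_insert, Finset.sum_insert ha]
    calc μ (f a ∪ ⋃ r ∈ s, f r) ≤ μ (f a) + μ (⋃ r ∈ s, f r) := h3 _ _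
      _ ≤ μ (f a) + ∑ r ∈ s, μ (f r) := by linarith

end aux

theorem stmt7 (μ : Set ℕ → ℝ)
    (h1 : μ Set.univ = 1)
    (h2 : ∀ X : Set ℕ, μ X ≤ 1)
    (h3 : ∀ X Y : Set ℕ, μ (X ∪ Y) ≤ μ X + μ Y)
    (h4 : ∀ (X : Set ℕ) (h k : ℕ), 0 < h → 0 < k →
      μ (affImage k h X) = (1 / (k : ℝ)) * μ X)
    (k : ℕ) (hk : 0 < k) (n : ℕ) (h : Fin n → ℕ)
    (hinc : ∀ i j : Fin n, i ≠ j → h i % k ≠ h j % k) :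
    ∀ F : Set ℕ, F.Finite →
      (n : ℝ) / k ≤ μ ((⋃ i : Fin n, affImage k (h i) Set.univ) \ F) := by
  intro F hF
  set V : Set ℕ := ⋃ i : Fin n, affImage k (h i) Set.univ with hV
  have hinj : Function.Injective (fun i : Fin n => h i % k) := by
    intro i j hij
    by_contra hne
    exact hinc i j hne hij
  set R : Finset ℕ := Finset.image (fun i : Fin n => h i % k) Finset.univ with hR
  have hRcard : R.card = n := by
    rw [hR, Finset.card_image_of_injective _ hinj, Finset.card_univ, Fintype.card_fin]
  have hRsub : R ⊆ Finset.range k := by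
    intro r hr
    rw [hR, Finset.mem_image] at hr
    obtain ⟨i, _, rfl⟩ := hr
    exact Finset.mem_range.mpr (Nat.mod_lt _ hk)
  have hnk : n ≤ k := by
    have := Finset.card_le_card hRsub
    rwa [hRcard, Finset.card_range] at this
  set S : Finset ℕ := Finset.range k \ R with hS
  have hScard : S.card = k - n := by
    rw [hS, Finset.card_sdiff_of_subset hRsub, Finset.card_range, hRcard]
  set B : ℕ := Finset.univ.sup h with hB
  set W : ℕ → Set ℕ := fun r => affImage k (if r = 0 then k else r) Set.univ with hW
  have hcover : (Set.univ : Set ℕ) =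
      (V \ F) ∪ ((F ∪ Set.Iic B) ∪ ⋃ r ∈ S, W r) := by
    apply Set.eq_of_subset_of_subset _ (Set.subset_univ _)
    intro m _
    by_cases hmR : m % k ∈ R
    · rw [hR, Finset.mem_image] at hmR
      obtain ⟨i, _, hi⟩ := hmR
      by_cases hmB : m ≤ B
      · exact Or.inr (Or.inl (Or.inr hmB))
      · have hhi : h i ≤ m :=
          le_trans (Finset.le_sup (Finset.mem_univ i)) (le_of_not_ge hmB)
        have hmV : m ∈ V := by
          have hdvd : k ∣ (m - h i) := (Nat.modEq_iff_dvd' hhi).mp hi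
          refine Set.mem_iUnion.mpr ⟨i, ⟨(m - h i) / k, trivial, ?_⟩⟩
          simp only []
          rw [Nat.mul_div_cancel' hdvd, Nat.sub_add_cancel hhi]
        by_cases hmF : m ∈ F
        · exact Or.inr (Or.inl (Or.inl hmF))
        · exact Or.inl ⟨hmV, hmF⟩
    · rcases Nat.eq_zero_or_pos m with rfl | hm
      · exact Or.inr (Or.inl (Or.inr (Nat.zero_le B)))
      · have hmS : m % k ∈ S := by
          rw [hS, Finset.mem_sdiff]
          exact ⟨Finset.mem_range.mpr (Nat.mod_lt _ hk), hmR⟩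
        refine Or.inr (Or.inr (Set.mem_biUnion hmS ?_))
        rw [hW]
        by_cases hr0 : m % k = 0
        · have hkm : k ∣ m := Nat.dvd_of_mod_eq_zero hr0
          have hmk : k ≤ m := Nat.le_of_dvd hm hkm
          have h1k : 1 ≤ m / k := Nat.one_le_div_iff hk |>.mpr hmk
          refine ⟨m / k - 1, trivial, ?_⟩
          simp only [hr0, if_pos]
          have : k * (m / k - 1) + k = k * (m / k) := by
            rw [Nat.mul_sub, Nat.mul_one, Nat.sub_add_cancel]
            exact Nat.le_mul_of_pos_right k h1k |>.trans_eq (by ring)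
          rw [this, Nat.mul_div_cancel' hkm]
        · refine ⟨m / k, trivial, ?_⟩
          simp only [hr0, if_neg, if_false]
          rw [Nat.div_add_mod]
  have hsum : ∑ r ∈ S, μ (W r) = (k - n : ℕ) * (1 / (k : ℝ)) := by
    have heach : ∀ r ∈ S, μ (W r) = 1 / (k : ℝ) := by
      intro r hr
      have hrpos : 0 < (if r = 0 then k else r) := by
        split <;> [exact hk; omega]
      rw [hW]
      have := h4 Set.univ (if r = 0 then k else r) k hrpos hk
      rw [this, h1, mul_one]
    rw [Finset.sum_congr rfl heach, Finset.sum_const, hScard, nsmul_eq_mul]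
  have hfin : μ (F ∪ Set.Iic B) ≤ 0 :=
    mu_finite μ h3 h4 _ (hF.union (Set.finite_Iic B))
  have hBU : μ (⋃ r ∈ S, W r) ≤ ∑ r ∈ S, μ (W r) :=
    mu_biUnion μ h3 (le_of_eq (mu_empty μ h4)) S W
  have hchain : (1 : ℝ) ≤ μ (V \ F) + (μ (F ∪ Set.Iic B) + μ (⋃ r ∈ S, W r)) := by
    calc (1 : ℝ) = μ Set.univ := h1.symm
      _ = μ ((V \ F) ∪ ((F ∪ Set.Iic B) ∪ ⋃ r ∈ S, W r)) := by rw [← hcover]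
      _ ≤ μ (V \ F) + μ ((F ∪ Set.Iic B) ∪ ⋃ r ∈ S, W r) := h3 _ _
      _ ≤ μ (V \ F) + (μ (F ∪ Set.Iic B) + μ (⋃ r ∈ S, W r)) := by
          have := h3 (F ∪ Set.Iic B) (⋃ r ∈ S, W r)
          linarith
  have hkR : (0 : ℝ) < (k : ℝ) := by exact_mod_cast hk
  have hcast : ((k - n : ℕ) : ℝ) = (k : ℝ) - n := by
    rw [Nat.cast_sub hnk]
  have hfinal : (1 : ℝ) ≤ μ (V \ F) + ((k : ℝ) - n) * (1 / k) := by
    have h5 : μ (⋃ r ∈ S, W r) ≤ ((k : ℝ) - n) * (1 / k) := by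
      rw [← hcast, ← hsum]; exact hBU
    linarith
  rw [div_le_iff₀ hkR] at *
  have : ((k : ℝ) - n) * (1 / k) = 1 - n / k := by field_simp
  rw [this] at hfinal
  have : (n : ℝ) / k ≤ μ (V \ F) := by linarith
  rwa [div_le_iff₀ hkR] at this
end

section
/- If μ* is an upper quasi-density on ℕ, then its associated lower quasi-density μ∗, defined by μ∗(X) := 1 − μ*(ℕ \ X), has the strong Darboux property: for all X ⊆ Y ⊆ ℕ and every a ∈ [μ∗(X), μ∗(Y)], there exists A with X ⊆ A ⊆ Y and μ∗(A) = a. -/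
def rq : ℕ → ℚ
  | 0 => 0
  | n+1 => (((n+1) % 2 : ℕ) : ℚ) / 2 + rq ((n+1)/2) / 2
decreasing_by exact Nat.div_lt_self (Nat.succ_pos n) one_lt_two

lemma rq_eq (n : ℕ) : rq n = ((n % 2 : ℕ) : ℚ) / 2 + rq (n/2) / 2 := by
  cases n with
  | zero => simp [rq]
  | succ m => rw [rq]

lemma rq_bounds (n : ℕ) : 0 ≤ rq n ∧ rq n < 1 := by
  induction n using Nat.strong_induction_on with
  | _ n ih =>
    rcases Nat.eq_zero_or_pos n with h | h
    · subst h; simp [rq]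
    · have h2 := ih (n/2) (Nat.div_lt_self h one_lt_two)
      have hm : ((n % 2 : ℕ) : ℚ) ≤ 1 := by
        have : n % 2 ≤ 1 := Nat.lt_succ_iff.mp (Nat.mod_lt n two_pos)
        exact_mod_cast this
      have hm0 : (0:ℚ) ≤ ((n % 2 : ℕ) : ℚ) := by positivity
      rw [rq_eq n]
      constructor <;> nlinarith [h2.1, h2.2]

lemma rq_split (m : ℕ) : ∀ n, rq n = rq (n % 2^m) + rq (n / 2^m) / 2^m := by
  induction m with
  | zero => intro n; simp [Nat.mod_one, Nat.div_one, rq]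
  | succ m ih =>
    intro n
    have h1 : n % 2^(m+1) % 2 = n % 2 := Nat.mod_mod_of_dvd n ⟨2^m, by ring⟩
    have h2 : n % 2^(m+1) / 2 = n / 2 % 2^m := by
      have : (2:ℕ)^(m+1) = 2 * 2^m := by ring
      rw [this]
      exact Nat.mod_mul_right_div_self n 2 (2^m)
    have h3 : n / 2^(m+1) = n / 2 / 2^m := by
      rw [Nat.div_div_eq_div_mul]
      congr 1
      ring
    rw [rq_eq n, rq_eq (n % 2^(m+1)), h1, h2, h3, ih (n/2)]
    push_cast
    ring

def nrev : ℕ → ℕ → ℕ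
  | 0, _ => 0
  | m+1, j => (j % 2) * 2^m + nrev m (j / 2)

lemma rq_nrev : ∀ m, ∀ j < 2^m, rq j * 2^m = (nrev m j : ℚ) := by
  intro m
  induction m with
  | zero =>
    intro j hj
    interval_cases j
    simp [rq, nrev]
  | succ m ih =>
    intro j hj
    have hj2 : j / 2 < 2^m := by
      rw [Nat.div_lt_iff_lt_mul two_pos]
      calc j < 2^(m+1) := hj
        _ = 2^m * 2 := by ring
    have := ih (j/2) hj2
    rw [rq_eq j]
    simp only [nrev]
    push_cast
    linear_combination this

lemma rq_eq_zero {n : ℕ} (h : rq n = 0) : n = 0 := by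
  induction n using Nat.strong_induction_on with
  | _ n ih =>
    rcases Nat.eq_zero_or_pos n with h0 | h0
    · exact h0
    · exfalso
      have hb := rq_bounds (n/2)
      have hm0 : (0:ℚ) ≤ ((n % 2 : ℕ) : ℚ) := by positivity
      rw [rq_eq n] at h
      have hmod : n % 2 = 0 := by
        by_contra hc
        have : n % 2 = 1 := Nat.mod_two_eq_zero_or_one n |>.resolve_left hc
        rw [this] at h
        norm_num at h
        linarith [hb.1]
      rw [hmod] at h
      simp at h
      have hhalf : n / 2 = 0 := ih (n/2) (Nat.div_lt_self h0 one_lt_two) h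
      omega

lemma rq_inj : Function.Injective rq := by
  intro a
  induction a using Nat.strong_induction_on with
  | _ a ih =>
    intro b hab
    rcases Nat.eq_zero_or_pos a with ha | ha
    · subst ha
      have : rq b = 0 := by rw [← hab]; simp [rq]
      exact (rq_eq_zero this).symm
    rcases Nat.eq_zero_or_pos b with hb | hb
    · subst hb
      have : rq a = 0 := by rw [hab]; simp [rq]
      exact absurd (rq_eq_zero this) (by omega)
    have hpar : a % 2 = b % 2 := by
      have hba := rq_bounds (a/2); have hbb := rq_bounds (b/2)
      have ea := rq_eq a; have eb := rq_eq b
      rcases Nat.mod_two_eq_zero_or_one a with h | h <;>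
        rcases Nat.mod_two_eq_zero_or_one b with h' | h' <;>
        rw [h] at ea ⊢ <;> rw [h'] at eb ⊢ <;> rw [ea, eb] at hab <;>
        push_cast at hab <;> first
        | rfl
        | (exfalso; linarith [hba.1, hba.2, hbb.1, hbb.2])
    have hhalf : rq (a/2) = rq (b/2) := by
      have ea := rq_eq a; have eb := rq_eq b
      rw [ea, eb, hpar] at hab
      linarith
    have := ih (a/2) (Nat.div_lt_self ha one_lt_two) hhalf
    omega

section mu
variable (μ : Set ℕ → ℝ)
    (h2 : ∀ X : Set ℕ, μ X ≤ 1)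
    (h3 : ∀ X Y : Set ℕ, μ (X ∪ Y) ≤ μ X + μ Y)
    (h4 : ∀ (X : Set ℕ) (h k : ℕ), 0 < h → 0 < k →
      μ (affImage k h X) = (1 / (k : ℝ)) * μ X)

include h4 in
lemma mu_empty_s14 : μ ∅ = 0 := by
  have := h4 ∅ 1 2 one_pos two_pos
  simp [affImage] at this
  linarith

include h4 in
lemma mu_zero_singleton_s14 : μ {0} = 0 := by
  have e1 : affImage 1 1 {0} = {1} := by
    ext n; simp [affImage]
  have e2 : affImage 2 1 {0} = {1} := by
    ext n; simp [affImage]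
  have := h4 {0} 1 1 one_pos one_pos
  have := h4 {0} 1 2 one_pos two_pos
  rw [e1] at *
  rw [e2] at *
  norm_num at *
  linarith

include h3 h4 in
lemma mu_subadd_finset (s : Finset ℕ) (f : ℕ → Set ℕ) :
    μ (⋃ j ∈ s, f j) ≤ ∑ j ∈ s, μ (f j) := by
  classical
  induction s using Finset.induction with
  | empty => simp [mu_empty_s14 μ h4]
  | insert a s hx ih =>
    rw [Finset.set_biUnion_insert, Finset.sum_insert hx]
    calc μ (f a ∪ ⋃ j ∈ s, f j) ≤ μ (f a) + μ (⋃ j ∈ s, f j) := h3 _ _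
      _ ≤ _ := by linarith

include h2 h3 h4 in
lemma mu_mod_bound (k j : ℕ) (hk : 0 < k) (W : Set ℕ) (hW : ∀ n ∈ W, n % k = j) :
    μ W ≤ (k : ℝ)⁻¹ := by
  have hkR : (0:ℝ) < (k:ℝ) := by exact_mod_cast hk
  have hinv : (0:ℝ) ≤ (k:ℝ)⁻¹ := by positivity
  rcases Nat.eq_zero_or_pos j with hj | hj
  · subst hj
    set V : Set ℕ := {v | k * v + k ∈ W} with hV
    have he : W \ {0} = affImage k k V := by
      ext n
      constructor
      · rintro ⟨hn, hn0⟩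
        have hmod := hW n hn
        have hnk : n = k * (n / k) := by
          conv_lhs => rw [← Nat.div_add_mod n k, hmod]
          omega
        have hn0' : n ≠ 0 := by simpa using hn0
        have hq : n / k ≠ 0 := by
          intro h0; rw [h0, Nat.mul_zero] at hnk; exact hn0' hnk
        obtain ⟨q, hq'⟩ := Nat.exists_eq_succ_of_ne_zero hq
        refine ⟨q, ?_, ?_⟩
        · show k * q + k ∈ W
          have : k * q + k = n := by rw [hnk, hq', Nat.mul_succ]
          rwa [this]
        · show k * q + k = n
          rw [hnk, hq', Nat.mul_succ]
      · rintro ⟨v, hv, rfl⟩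
        refine ⟨hv, ?_⟩
        simp only [Set.mem_singleton_iff]
        positivity
    have hWsplit : W = (W \ {0}) ∪ (W ∩ {0}) := by
      ext n; by_cases h : n = 0 <;> simp [h] <;> tauto
    have hints : μ (W ∩ {0}) = 0 := by
      by_cases h0 : 0 ∈ W
      · have h00 : W ∩ {0} = {0} := by
          ext n; simp only [Set.mem_inter_iff, Set.mem_singleton_iff]
          constructor
          · rintro ⟨_, rfl⟩; rfl
          · rintro rfl; exact ⟨h0, rfl⟩
        rw [h00]; exact mu_zero_singleton_s14 μ h4
      · have h00 : W ∩ {0} = ∅ := by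
          ext n; simp only [Set.mem_inter_iff, Set.mem_singleton_iff,
            Set.mem_empty_iff_false, iff_false, not_and]
          rintro hn rfl; exact h0 hn
        rw [h00]; exact mu_empty_s14 μ h4
    have hdiff : μ (W \ {0}) ≤ (k:ℝ)⁻¹ := by
      rw [he, h4 V k k hk hk, one_div]
      nlinarith [h2 V]
    have hsub := h3 (W \ {0}) (W ∩ {0})
    rw [← hWsplit] at hsub
    linarith
  · rcases lt_or_ge j k with hjk | hjk
    · set V : Set ℕ := {v | k * v + j ∈ W} with hV
      have he : W = affImage k j V := by
        ext n
        constructor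
        · intro hn
          have hmod := hW n hn
          have hnk : k * (n / k) + j = n := by
            conv_rhs => rw [← Nat.div_add_mod n k, hmod]
          exact ⟨n / k, by show k * (n/k) + j ∈ W; rwa [hnk], hnk⟩
        · rintro ⟨v, hv, rfl⟩; exact hv
      rw [he, h4 V j k hj hk, one_div]
      nlinarith [h2 V]
    · have hWe : W = ∅ := by
        ext n; simp only [Set.mem_empty_iff_false, iff_false]
        intro hn
        have := hW n hn
        have := Nat.mod_lt n hk
        omega
      rw [hWe, mu_empty_s14 μ h4]
      positivity


include h2 h3 h4 in
lemma mu_window (t t' : ℝ) (ht : 0 ≤ t) (htt' : t ≤ t') (W : Set ℕ)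
    (hW : ∀ n ∈ W, t ≤ (rq n : ℝ) ∧ ((rq n : ℝ) < t')) :
    μ W ≤ t' - t := by
  classical
  have hmain : ∀ m : ℕ, μ W ≤ (t' - t) + 2 / 2^m := by
    intro m
    have hk : (0:ℕ) < 2^m := Nat.pow_pos two_pos
    have hkR : (0:ℝ) < (2:ℝ)^m := by positivity
    set p : ℕ → Prop := fun j => t - ((2:ℝ)^m)⁻¹ < (rq j : ℝ) ∧ ((rq j : ℝ) < t') with hp
    have hdecomp : W = ⋃ j ∈ Finset.range (2^m), (W ∩ {n | n % 2^m = j}) := by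
      ext n
      simp only [Set.mem_iUnion, Finset.mem_range, Set.mem_inter_iff, Set.mem_setOf_eq,
        exists_prop]
      constructor
      · intro hn; exact ⟨n % 2^m, Nat.mod_lt n hk, hn, rfl⟩
      · rintro ⟨j, _, hn, _⟩; exact hn
    have step1 : μ W ≤ ∑ j ∈ Finset.range (2^m), μ (W ∩ {n | n % 2^m = j}) := by
      conv_lhs => rw [hdecomp]
      exact mu_subadd_finset μ h3 h4 _ _
    have step2 : ∀ j ∈ Finset.range (2^m),
        μ (W ∩ {n | n % 2^m = j}) ≤ if p j then ((2:ℝ)^m)⁻¹ else 0 := by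
      intro j hj
      by_cases hc : p j
      · rw [if_pos hc]
        have := mu_mod_bound μ h2 h3 h4 (2^m) j hk (W ∩ {n | n % 2^m = j}) (fun n hn => hn.2)
        calc μ (W ∩ {n | n % 2^m = j}) ≤ ((2^m : ℕ) : ℝ)⁻¹ := this
          _ = ((2:ℝ)^m)⁻¹ := by push_cast; ring_nf
      · rw [if_neg hc]
        have hWempty : W ∩ {n | n % 2^m = j} = ∅ := by
          ext n
          simp only [Set.mem_inter_iff, Set.mem_setOf_eq, Set.mem_empty_iff_false, iff_false,
            not_and]
          intro hn hmod
          apply hc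
          obtain ⟨hl, hr⟩ := hW n hn
          have hsplit := rq_split m n
          rw [hmod] at hsplit
          have hb := rq_bounds (n / 2^m)
          have hbr : (0:ℝ) ≤ ((rq (n / 2^m) : ℚ) : ℝ) ∧ ((rq (n / 2^m) : ℚ) : ℝ) < 1 := by
            exact_mod_cast hb
          have hsr : ((rq n : ℚ) : ℝ) = (rq j : ℝ) + ((rq (n / 2^m) : ℚ) : ℝ) / 2^m := by
            exact_mod_cast hsplit
          have hδge : (0:ℝ) ≤ ((rq (n / 2^m) : ℚ) : ℝ) / 2^m := div_nonneg hbr.1 (le_of_lt hkR)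
          have hδlt : ((rq (n / 2^m) : ℚ) : ℝ) / 2^m < ((2:ℝ)^m)⁻¹ := by
            rw [div_lt_iff₀ hkR, inv_mul_cancel₀ (ne_of_gt hkR)]
            exact hbr.2
          constructor
          · linarith
          · linarith
        rw [hWempty, mu_empty_s14 μ h4]
    have step3 : ∑ j ∈ Finset.range (2^m), (if p j then ((2:ℝ)^m)⁻¹ else 0)
        = ((Finset.range (2^m)).filter p).card * ((2:ℝ)^m)⁻¹ := by
      rw [← Finset.sum_filter]
      simp [Finset.sum_const, nsmul_eq_mul]
    -- cardinality bound
    set a : ℕ := ⌊t * 2^m⌋₊ with ha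
    set b : ℕ := ⌈t' * 2^m⌉₊ with hb
    have hmaps : ∀ j ∈ (Finset.range (2^m)).filter p, nrev m j ∈ Finset.Ico a b := by
      intro j hj
      rw [Finset.mem_filter, Finset.mem_range] at hj
      obtain ⟨hjr, hp1, hp2⟩ := hj
      have hnr := rq_nrev m j hjr
      have hnrR : ((rq j : ℚ) : ℝ) * 2^m = ((nrev m j : ℕ) : ℝ) := by exact_mod_cast hnr
      rw [Finset.mem_Ico]
      constructor
      · -- a ≤ nrev m j
        have hinvmul : ((2:ℝ)^m)⁻¹ * 2^m = 1 := inv_mul_cancel₀ (ne_of_gt hkR)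
        have h1 : t * 2^m < (nrev m j : ℝ) + 1 := by
          nlinarith [mul_lt_mul_of_pos_right hp1 hkR, hinvmul, hnrR]
        have : a < nrev m j + 1 := by
          rw [ha]
          rw [Nat.floor_lt (by positivity)]
          push_cast
          linarith
        omega
      · rw [hb, Nat.lt_ceil]
        nlinarith [mul_lt_mul_of_pos_right hp2 hkR, hnrR]
    have hinj : ∀ j ∈ (Finset.range (2^m)).filter p, ∀ j' ∈ (Finset.range (2^m)).filter p,
        nrev m j = nrev m j' → j = j' := by
      intro j hj j' hj'
      rw [Finset.mem_filter, Finset.mem_range] at hj hj'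
      intro he
      apply rq_inj
      have e1 := rq_nrev m j hj.1
      have e2 := rq_nrev m j' hj'.1
      have h2m : (0:ℚ) < (2:ℚ)^m := by positivity
      have : rq j * 2^m = rq j' * 2^m := by rw [e1, e2, he]
      exact mul_right_cancel₀ (ne_of_gt h2m) this
    have hcard : ((Finset.range (2^m)).filter p).card ≤ (Finset.Ico a b).card :=
      Finset.card_le_card_of_injOn (fun j => nrev m j) hmaps hinj
    have hcard2 : ((Finset.Ico a b).card : ℝ) ≤ (t' - t) * 2^m + 2 := by
      rw [Nat.card_Ico]
      rcases le_or_gt a b with hab | hab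
      · rw [Nat.cast_sub hab]
        have hbu : (b:ℝ) < t' * 2^m + 1 := by
          rw [hb]
          exact Nat.ceil_lt_add_one (mul_nonneg (le_trans ht htt') (le_of_lt hkR))
        have hal : t * 2^m - 1 < (a:ℝ) := by
          have := Nat.lt_floor_add_one (t * 2^m)
          rw [← ha] at this
          linarith
        linarith
      · rw [Nat.sub_eq_zero_of_le (le_of_lt hab)]
        push_cast
        nlinarith
    calc μ W ≤ ∑ j ∈ Finset.range (2^m), (if p j then ((2:ℝ)^m)⁻¹ else 0) := by
          refine le_trans step1 (Finset.sum_le_sum step2)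
      _ = ((Finset.range (2^m)).filter p).card * ((2:ℝ)^m)⁻¹ := step3
      _ ≤ ((t' - t) * 2^m + 2) * ((2:ℝ)^m)⁻¹ := by
          apply mul_le_mul_of_nonneg_right _ (by positivity)
          calc (((Finset.range (2^m)).filter p).card : ℝ) ≤ ((Finset.Ico a b).card : ℝ) := by
                exact_mod_cast hcard
            _ ≤ (t' - t) * 2^m + 2 := hcard2
      _ = (t' - t) + 2 / 2^m := by field_simp
  refine le_of_forall_pos_le_add ?_
  intro ε hε
  obtain ⟨m, hm⟩ := pow_unbounded_of_one_lt (2 / ε) (one_lt_two (α := ℝ))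
  have h2m : (0:ℝ) < (2:ℝ)^m := by positivity
  have : 2 / 2^m < ε := by
    rw [div_lt_iff₀ h2m]
    rw [div_lt_iff₀ hε] at hm
    nlinarith
  linarith [hmain m]


end mu

theorem stmt14 (μ : Set ℕ → ℝ)
    (h1 : μ Set.univ = 1)
    (h2 : ∀ X : Set ℕ, μ X ≤ 1)
    (h3 : ∀ X Y : Set ℕ, μ (X ∪ Y) ≤ μ X + μ Y)
    (h4 : ∀ (X : Set ℕ) (h k : ℕ), 0 < h → 0 < k →
      μ (affImage k h X) = (1 / (k : ℝ)) * μ X) :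
    ∀ X Y : Set ℕ, X ⊆ Y → ∀ a : ℝ,
      (1 - μ Xᶜ) ≤ a → a ≤ (1 - μ Yᶜ) →
      ∃ A : Set ℕ, X ⊆ A ∧ A ⊆ Y ∧ 1 - μ Aᶜ = a := by
  intro X Y hXY a ha1 ha2
  classical
  set S : ℝ → Set ℕ := fun t => {n | (rq n : ℝ) < t} with hS
  set A : ℝ → Set ℕ := fun t => X ∪ (Y ∩ S t) with hA
  set g : ℝ → ℝ := fun t => 1 - μ (A t)ᶜ with hg
  have hAmono : ∀ t t', t ≤ t' → A t ⊆ A t' := by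
    intro t t' htt' n hn
    rcases hn with hn | hn
    · exact Or.inl hn
    · exact Or.inr ⟨hn.1, lt_of_lt_of_le hn.2 htt'⟩
  have lip : ∀ t t', 0 ≤ t → t ≤ t' → g t' ≤ g t + (t' - t) := by
    intro t t' ht htt'
    have hsubset : A t ⊆ A t' := hAmono t t' htt'
    have hsub : (A t)ᶜ = (A t')ᶜ ∪ (A t' \ A t) := by
      ext n
      simp only [Set.mem_compl_iff, Set.mem_union, Set.mem_diff]
      constructor
      · intro hn
        by_cases h : n ∈ A t'
        · exact Or.inr ⟨h, hn⟩
        · exact Or.inl h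
      · rintro (hn | hn)
        · intro hc; exact hn (hsubset hc)
        · exact hn.2
    have hW : ∀ n ∈ A t' \ A t, t ≤ (rq n : ℝ) ∧ ((rq n : ℝ) < t') := by
      rintro n ⟨hn', hn⟩
      have hnX : n ∉ X := fun h => hn (Or.inl h)
      rcases hn' with h | h
      · exact absurd h hnX
      · refine ⟨?_, h.2⟩
        by_contra hc
        push_neg at hc
        exact hn (Or.inr ⟨h.1, hc⟩)
    have hwin := mu_window μ h2 h3 h4 t t' ht htt' _ hW
    have hsum := h3 (A t')ᶜ (A t' \ A t)
    rw [← hsub] at hsum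
    simp only [hg]
    linarith
  have hg1 : g 1 = 1 - μ Yᶜ := by
    have : A 1 = Y := by
      simp only [hA, hS]
      have hSu : {n : ℕ | ((rq n : ℚ) : ℝ) < 1} = Set.univ := by
        ext n
        simp only [Set.mem_setOf_eq, Set.mem_univ, iff_true]
        exact_mod_cast (rq_bounds n).2
      rw [hSu, Set.inter_univ, Set.union_eq_self_of_subset_left hXY]
    rw [hg]; simp only [this]
  have hg0 : g 0 = 1 - μ Xᶜ := by
    have : A 0 = X := by
      simp only [hA, hS]
      have hSe : {n : ℕ | ((rq n : ℚ) : ℝ) < 0} = ∅ := by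
        ext n
        simp only [Set.mem_setOf_eq, Set.mem_empty_iff_false, iff_false, not_lt]
        exact_mod_cast (rq_bounds n).1
      rw [hSe, Set.inter_empty, Set.union_empty]
    rw [hg]; simp only [this]
  set T : Set ℝ := {t | t ∈ Set.Icc (0:ℝ) 1 ∧ a ≤ g t} with hT
  have hne : (1:ℝ) ∈ T := ⟨⟨zero_le_one, le_refl 1⟩, by rw [hg1]; exact ha2⟩
  have hbdd : BddBelow T := ⟨0, fun t ht => ht.1.1⟩
  set c : ℝ := sInf T with hc
  have hc0 : 0 ≤ c := le_csInf ⟨1, hne⟩ (fun t ht => ht.1.1)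
  have hc1 : c ≤ 1 := csInf_le hbdd hne
  have hupper : a ≤ g c := by
    refine le_of_forall_pos_le_add ?_
    intro ε hε
    obtain ⟨t, htT, htlt⟩ := Real.lt_sInf_add_pos ⟨1, hne⟩ hε
    have hct : c ≤ t := csInf_le hbdd htT
    have := lip c t hc0 hct
    have := htT.2
    linarith
  have hlower : g c ≤ a := by
    refine le_of_forall_pos_le_add ?_
    intro ε hε
    rcases eq_or_lt_of_le hc0 with hceq | hcpos
    · rw [← hceq, hg0]; linarith
    · set ε' : ℝ := min ε c with hε'
      have hε'pos : 0 < ε' := lt_min hε hcpos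
      set t : ℝ := c - ε' with ht
      have ht0 : 0 ≤ t := by
        have : ε' ≤ c := min_le_right ε c
        simp only [ht]; linarith
      have htc : t < c := by simp only [ht]; linarith
      have htnT : t ∉ T := fun hmem => absurd (csInf_le hbdd hmem) (not_le.mpr htc)
      have htI : t ∈ Set.Icc (0:ℝ) 1 := ⟨ht0, by linarith⟩
      have hgt : g t < a := by
        by_contra hcon
        push_neg at hcon
        exact htnT ⟨htI, hcon⟩
      have := lip t c ht0 (le_of_lt htc)
      have hε'le : ε' ≤ ε := min_le_left ε c
      have : g c ≤ g t + ε' := by simp only [ht] at this ⊢; linarith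
      linarith
  refine ⟨A c, ?_, ?_, ?_⟩
  · exact Set.subset_union_left
  · exact Set.union_subset hXY Set.inter_subset_left
  · have : g c = a := le_antisymm hlower hupper
    simpa [hg] using this
end
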